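/- arXiv:1304.7440 — 2 statements merged into one kernel-verified Lean document; each statement's English description precedes it below -/
import Mathlib

section
/- In the Yokonuma–Hecke algebra Y_{d,n}(u), for every fixed 1 ≤ j ≤ n−2, the two-sided ideal generated by the set {c_{i,i+1} : 1 ≤ i ≤ n−2} equals the two-sided ideal generated by the single element c_{j,j+1}. In particular, with γ := g_1 ⋯ g_{n−1}, one has γ^{i−1} c_{1,2} = c_{i,i+1} γ^{i−1} for all 1 ≤ i ≤ n−2. -/
noncomputable section

open scoped BigOperators

/-- Index type for the generators of the Yokonuma–Hecke algebra `Y_{d,n}(u)`: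
`Sum.inl i` encodes the braiding generator `g_{i+1}` and `Sum.inr j` the framing
generator `t_{j+1}` (`0`-based encoding of the `1`-based generators). -/
abbrev YHIdx (n : ℕ) := Sum (Fin (n - 1)) (Fin n)

/-- The free `ℂ`-algebra on the generators `g_1, …, g_{n-1}, t_1, …, t_n`. -/
abbrev YHFree (n : ℕ) := FreeAlgebra ℂ (YHIdx n)

/-- The generator `g_i` (1-based) of the free algebra; junk value `0` out of range. -/
def gF (n i : ℕ) : YHFree n :=
  if h : 1 ≤ i ∧ i ≤ n - 1 then FreeAlgebra.ι ℂ (Sum.inl ⟨i - 1, by omega⟩) else 0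

/-- The generator `t_j` (1-based) of the free algebra; junk value `0` out of range. -/
def tF (n j : ℕ) : YHFree n :=
  if h : 1 ≤ j ∧ j ≤ n then FreeAlgebra.ι ℂ (Sum.inr ⟨j - 1, by omega⟩) else 0

/-- The element `e_i := (1/d) ∑_{s=0}^{d-1} t_i^s t_{i+1}^{d-s}` of the free algebra. -/
def eF (d n i : ℕ) : YHFree n :=
  (d : ℂ)⁻¹ • ∑ s ∈ Finset.range d, tF n i ^ s * tF n (i + 1) ^ (d - s)

/-- The defining relations of the Yokonuma–Hecke algebra `Y_{d,n}(u)`. -/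
inductive YHRel (d n : ℕ) (u : ℂ) : YHFree n → YHFree n → Prop
  | g_comm {i j : ℕ} (hi : 1 ≤ i) (hij : i + 1 < j) (hj : j ≤ n - 1) :
      YHRel d n u (gF n i * gF n j) (gF n j * gF n i)
  | braid {i : ℕ} (hi : 1 ≤ i) (hi' : i + 1 ≤ n - 1) :
      YHRel d n u (gF n i * gF n (i + 1) * gF n i)
        (gF n (i + 1) * gF n i * gF n (i + 1))
  | t_comm {i j : ℕ} (hi : 1 ≤ i) (hi' : i ≤ n) (hj : 1 ≤ j) (hj' : j ≤ n) :
      YHRel d n u (tF n i * tF n j) (tF n j * tF n i)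
  | t_pow {i : ℕ} (hi : 1 ≤ i) (hi' : i ≤ n) : YHRel d n u (tF n i ^ d) 1
  | g_t {i : ℕ} (hi : 1 ≤ i) (hi' : i ≤ n - 1) :
      YHRel d n u (gF n i * tF n i) (tF n (i + 1) * gF n i)
  | g_t' {i : ℕ} (hi : 1 ≤ i) (hi' : i ≤ n - 1) :
      YHRel d n u (gF n i * tF n (i + 1)) (tF n i * gF n i)
  | g_t_comm {i j : ℕ} (hi : 1 ≤ i) (hi' : i ≤ n - 1) (hj : 1 ≤ j) (hj' : j ≤ n)
      (h1 : j ≠ i) (h2 : j ≠ i + 1) :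
      YHRel d n u (gF n i * tF n j) (tF n j * gF n i)
  | quad {i : ℕ} (hi : 1 ≤ i) (hi' : i ≤ n - 1) :
      YHRel d n u (gF n i ^ 2)
        (1 + (u - 1) • eF d n i + (u - 1) • (eF d n i * gF n i))

/-- The Yokonuma–Hecke algebra `Y_{d,n}(u)`: the quotient of the free algebra on the
generators `g_1, …, g_{n-1}, t_1, …, t_n` by (the two-sided ideal generated by) the
defining relations. -/
abbrev YH (d n : ℕ) (u : ℂ) := RingQuot (YHRel d n u)

/-- The generator `g_i` of `Y_{d,n}(u)` (1-based). -/
def yg (d n : ℕ) (u : ℂ) (i : ℕ) : YH d n u :=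
  RingQuot.mkAlgHom ℂ (YHRel d n u) (gF n i)

/-- The generator `t_j` of `Y_{d,n}(u)` (1-based). -/
def yt (d n : ℕ) (u : ℂ) (j : ℕ) : YH d n u :=
  RingQuot.mkAlgHom ℂ (YHRel d n u) (tF n j)

/-- The idempotent `e_i = (1/d) ∑_{s=0}^{d-1} t_i^s t_{i+1}^{d-s}` in `Y_{d,n}(u)`. -/
def ye (d n : ℕ) (u : ℂ) (i : ℕ) : YH d n u :=
  (d : ℂ)⁻¹ • ∑ s ∈ Finset.range d, yt d n u i ^ s * yt d n u (i + 1) ^ (d - s)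

/-- The element `e_{i,j} = (1/d) ∑_{s=0}^{d-1} t_i^s t_j^{d-s}` in `Y_{d,n}(u)`. -/
def yeij (d n : ℕ) (u : ℂ) (i j : ℕ) : YH d n u :=
  (d : ℂ)⁻¹ • ∑ s ∈ Finset.range d, yt d n u i ^ s * yt d n u j ^ (d - s)

/-- The Steinberg-type element
`g_{i,i+1} = 1 + g_i + g_{i+1} + g_i g_{i+1} + g_{i+1} g_i + g_i g_{i+1} g_i`. -/
def ygSt (d n : ℕ) (u : ℂ) (i : ℕ) : YH d n u :=
  1 + yg d n u i + yg d n u (i + 1) + yg d n u i * yg d n u (i + 1)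
    + yg d n u (i + 1) * yg d n u i + yg d n u i * yg d n u (i + 1) * yg d n u i

/-- The element `r_{i,i+1} = e_i e_{i+1} g_{i,i+1}` of `Y_{d,n}(u)`. -/
def yr (d n : ℕ) (u : ℂ) (i : ℕ) : YH d n u :=
  ye d n u i * ye d n u (i + 1) * ygSt d n u i

/-- The element `c_{i,i+1} = (∑_{k=0}^{d-1} t_i^k) e_i e_{i+1} g_{i,i+1}` of `Y_{d,n}(u)`. -/
def yc (d n : ℕ) (u : ℂ) (i : ℕ) : YH d n u :=
  (∑ k ∈ Finset.range d, yt d n u i ^ k) *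
    (ye d n u i * ye d n u (i + 1) * ygSt d n u i)


/-- The element `γ = g_1 g_2 ⋯ g_{n-1}` of `Y_{d,n}(u)`. -/
def ygam (d n : ℕ) (u : ℂ) : YH d n u :=
  ((List.range (n - 1)).map fun k => yg d n u (k + 1)).prod

namespace YHAux

/-! ### General ring helpers -/

section Helpers

variable {A : Type*} [Ring A]

lemma mul_pow_shift {x t t' : A} (h : x * t = t' * x) (k : ℕ) :
    x * t ^ k = t' ^ k * x := by
  induction k with
  | zero => simp
  | succ k ih =>
      rw [pow_succ, ← mul_assoc, ih, mul_assoc, h, ← mul_assoc, ← pow_succ]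

lemma shift_mul {γ x x' y y' : A} (hx : γ * x = x' * γ) (hy : γ * y = y' * γ) :
    γ * (x * y) = (x' * y') * γ := by
  rw [← mul_assoc, hx, mul_assoc, hy, ← mul_assoc]

lemma mul_shift {x y t t1 t2 : A} (hy : y * t = t1 * y) (hx : x * t1 = t2 * x) :
    (x * y) * t = t2 * (x * y) := by
  rw [mul_assoc, hy, ← mul_assoc, hx, mul_assoc]

lemma mul_pow_eq_one {x y : A} (h : x * y = 1) (k : ℕ) : x ^ k * y ^ k = 1 := by
  induction k with
  | zero => simp
  | succ k ih =>
      rw [pow_succ, pow_succ', mul_assoc, ← mul_assoc x, h, one_mul, ih]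

lemma term_step {a b : A} {d s : ℕ} (hc : a * b = b * a) (hb : b ^ d = 1)
    (hs : s < d) :
    (a * b ^ (d - 1)) * (a ^ s * b ^ (d - s)) = a ^ (s + 1) * b ^ (d - (s + 1)) := by
  have hab : Commute a b := hc
  have h1 : b ^ (d - 1) * a ^ s = a ^ s * b ^ (d - 1) := (hab.symm.pow_pow _ _)
  have h2 : (d - 1) + (d - s) = (d - (s + 1)) + d := by omega
  calc a * b ^ (d - 1) * (a ^ s * b ^ (d - s))
      = a * ((b ^ (d - 1) * a ^ s) * b ^ (d - s)) := by rw [mul_assoc, mul_assoc]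
    _ = a * (a ^ s * (b ^ (d - 1) * b ^ (d - s))) := by rw [h1, mul_assoc]
    _ = (a * a ^ s) * (b ^ (d - 1) * b ^ (d - s)) := by
        rw [← mul_assoc]
    _ = a ^ (s + 1) * b ^ ((d - 1) + (d - s)) := by rw [← pow_succ', ← pow_add]
    _ = a ^ (s + 1) * (b ^ (d - (s + 1)) * b ^ d) := by rw [h2, pow_add b]
    _ = a ^ (s + 1) * b ^ (d - (s + 1)) := by rw [hb, mul_one]

lemma prod_shift {a b : A} {d : ℕ} (hd : 1 ≤ d) (hc : a * b = b * a)
    (ha : a ^ d = 1) (hb : b ^ d = 1) :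
    (a * b ^ (d - 1)) * (∑ s ∈ Finset.range d, a ^ s * b ^ (d - s)) =
      ∑ s ∈ Finset.range d, a ^ s * b ^ (d - s) := by
  rw [Finset.mul_sum]
  have step : ∀ s ∈ Finset.range d,
      (a * b ^ (d - 1)) * (a ^ s * b ^ (d - s)) = a ^ (s + 1) * b ^ (d - (s + 1)) :=
    fun s hs => term_step hc hb (Finset.mem_range.mp hs)
  rw [Finset.sum_congr rfl step]
  have key : (∑ s ∈ Finset.range d, a ^ (s + 1) * b ^ (d - (s + 1))) + a ^ 0 * b ^ (d - 0) =
      (∑ s ∈ Finset.range d, a ^ s * b ^ (d - s)) + a ^ d * b ^ (d - d) := by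
    rw [← Finset.sum_range_succ' (fun s => a ^ s * b ^ (d - s)) d,
      Finset.sum_range_succ]
  have h0 : (a : A) ^ 0 * b ^ (d - 0) = 1 := by simp [hb]
  have hdd : a ^ d * b ^ (d - d) = 1 := by simp [ha]
  rw [h0, hdd] at key
  exact add_right_cancel key

lemma term_mul {a b : A} {d : ℕ} (hd : 1 ≤ d) (hc : a * b = b * a)
    (ha : a ^ d = 1) (hb : b ^ d = 1) :
    ∀ s, s ≤ d →
      (a ^ s * b ^ (d - s)) * (∑ s ∈ Finset.range d, a ^ s * b ^ (d - s)) =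
        ∑ s ∈ Finset.range d, a ^ s * b ^ (d - s) := by
  intro s
  induction s with
  | zero => intro _; simp [hb]
  | succ s ih =>
      intro hs
      have hs' : s < d := by omega
      rw [← term_step hc hb hs', mul_assoc, ih (by omega), prod_shift hd hc ha hb]

lemma sum_sq {a b : A} {d : ℕ} (hd : 1 ≤ d) (hc : a * b = b * a)
    (ha : a ^ d = 1) (hb : b ^ d = 1) :
    (∑ s ∈ Finset.range d, a ^ s * b ^ (d - s)) *
      (∑ s ∈ Finset.range d, a ^ s * b ^ (d - s)) =
      d • (∑ s ∈ Finset.range d, a ^ s * b ^ (d - s)) := by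
  rw [Finset.sum_mul, Finset.sum_congr rfl
    (fun s hs => term_mul hd hc ha hb s (le_of_lt (Finset.mem_range.mp hs)))]
  simp

lemma sum_symm {a b : A} {d : ℕ} (hd : 1 ≤ d) (hc : a * b = b * a)
    (ha : a ^ d = 1) (hb : b ^ d = 1) :
    ∑ s ∈ Finset.range d, a ^ s * b ^ (d - s) =
      ∑ s ∈ Finset.range d, b ^ s * a ^ (d - s) := by
  have hab : Commute a b := hc
  rw [Finset.range_eq_Ico, Finset.sum_eq_sum_Ico_succ_bot hd,
    Finset.sum_eq_sum_Ico_succ_bot hd (fun s => b ^ s * a ^ (d - s))]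
  have h0 : (a : A) ^ 0 * b ^ (d - 0) = b ^ 0 * a ^ (d - 0) := by simp [ha, hb]
  rw [h0]
  congr 1
  refine Finset.sum_nbij' (fun s => d - s) (fun s => d - s) ?_ ?_ ?_ ?_ ?_
  · intro s hs; simp only [Finset.mem_Ico] at hs ⊢; omega
  · intro s hs; simp only [Finset.mem_Ico] at hs ⊢; omega
  · intro s hs; simp only [Finset.mem_Ico] at hs; show d - (d - s) = s; omega
  · intro s hs; simp only [Finset.mem_Ico] at hs; show d - (d - s) = s; omega
  · intro s hs
    simp only [Finset.mem_Ico] at hs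
    show a ^ s * b ^ (d - s) = b ^ (d - s) * a ^ (d - (d - s))
    rw [show d - (d - s) = s by omega]
    exact (hab.pow_pow _ _).eq

end Helpers

/-! ### Basic relations in `YH d n u` -/

section Relations

variable (d n : ℕ) (u : ℂ)

lemma rel_eq {a b : YHFree n} (h : YHRel d n u a b) :
    RingQuot.mkAlgHom ℂ (YHRel d n u) a = RingQuot.mkAlgHom ℂ (YHRel d n u) b :=
  RingQuot.mkAlgHom_rel ℂ h

lemma ye_def (i : ℕ) :
    ye d n u i = RingQuot.mkAlgHom ℂ (YHRel d n u) (eF d n i) := by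
  simp only [ye, eF, map_smul, map_sum, map_mul, map_pow, yt]

lemma yt_comm {i j : ℕ} (hi : 1 ≤ i) (hi' : i ≤ n) (hj : 1 ≤ j) (hj' : j ≤ n) :
    yt d n u i * yt d n u j = yt d n u j * yt d n u i := by
  simpa only [map_mul, yg, yt] using rel_eq d n u (YHRel.t_comm hi hi' hj hj')

lemma yt_pow_d {i : ℕ} (hi : 1 ≤ i) (hi' : i ≤ n) : yt d n u i ^ d = 1 := by
  simpa only [map_pow, map_one, yg, yt] using rel_eq d n u (YHRel.t_pow hi hi')

lemma yg_yt_i {i : ℕ} (hi : 1 ≤ i) (hi' : i ≤ n - 1) :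
    yg d n u i * yt d n u i = yt d n u (i + 1) * yg d n u i := by
  simpa only [map_mul, yg, yt] using rel_eq d n u (YHRel.g_t hi hi')

lemma yg_yt_i1 {i : ℕ} (hi : 1 ≤ i) (hi' : i ≤ n - 1) :
    yg d n u i * yt d n u (i + 1) = yt d n u i * yg d n u i := by
  simpa only [map_mul, yg, yt] using rel_eq d n u (YHRel.g_t' hi hi')

lemma yg_yt_other {i j : ℕ} (hi : 1 ≤ i) (hi' : i ≤ n - 1) (hj : 1 ≤ j) (hj' : j ≤ n)
    (h1 : j ≠ i) (h2 : j ≠ i + 1) :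
    yg d n u i * yt d n u j = yt d n u j * yg d n u i := by
  simpa only [map_mul, yg, yt] using rel_eq d n u (YHRel.g_t_comm hi hi' hj hj' h1 h2)

lemma yg_braid {i : ℕ} (hi : 1 ≤ i) (hi' : i + 1 ≤ n - 1) :
    yg d n u i * yg d n u (i + 1) * yg d n u i =
      yg d n u (i + 1) * yg d n u i * yg d n u (i + 1) := by
  simpa only [map_mul, yg, yt] using rel_eq d n u (YHRel.braid hi hi')

lemma yg_gcomm {i j : ℕ} (hi : 1 ≤ i) (hij : i + 1 < j) (hj : j ≤ n - 1) :
    yg d n u i * yg d n u j = yg d n u j * yg d n u i := by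
  simpa only [map_mul, yg, yt] using rel_eq d n u (YHRel.g_comm hi hij hj)

lemma yg_sq {i : ℕ} (hi : 1 ≤ i) (hi' : i ≤ n - 1) :
    yg d n u i ^ 2 =
      1 + (u - 1) • ye d n u i + (u - 1) • (ye d n u i * yg d n u i) := by
  have h := rel_eq d n u (YHRel.quad hi hi')
  simp only [map_pow, map_add, map_one, map_smul, map_mul] at h
  rw [ye_def]
  exact h

end Relations

/-! ### Properties of `e_i` and invertibility of `g_i` -/

section EUnit

variable (d n : ℕ) (u : ℂ)

/-- The un-normalised sum `S_i = ∑_s t_i^s t_{i+1}^{d-s}`. -/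
def yS (i : ℕ) : YH d n u :=
  ∑ s ∈ Finset.range d, yt d n u i ^ s * yt d n u (i + 1) ^ (d - s)

lemma ye_eq_yS (i : ℕ) : ye d n u i = (d : ℂ)⁻¹ • yS d n u i := rfl

lemma yg_yS_comm {i : ℕ} (hd : 1 ≤ d) (hi : 1 ≤ i) (hi' : i ≤ n - 1) :
    yg d n u i * yS d n u i = yS d n u i * yg d n u i := by
  have hin : i ≤ n := by omega
  have hin1 : i + 1 ≤ n := by omega
  have hc : yt d n u i * yt d n u (i + 1) = yt d n u (i + 1) * yt d n u i :=
    yt_comm d n u hi hin (by omega) hin1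
  have ha : yt d n u i ^ d = 1 := yt_pow_d d n u hi hin
  have hb : yt d n u (i + 1) ^ d = 1 := yt_pow_d d n u (by omega) hin1
  have key : ∀ s, yg d n u i * (yt d n u i ^ s * yt d n u (i + 1) ^ (d - s)) =
      (yt d n u (i + 1) ^ s * yt d n u i ^ (d - s)) * yg d n u i :=
    fun s => shift_mul (mul_pow_shift (yg_yt_i d n u hi hi') s)
      (mul_pow_shift (yg_yt_i1 d n u hi hi') (d - s))
  calc yg d n u i * yS d n u i
      = ∑ s ∈ Finset.range d,
          (yt d n u (i + 1) ^ s * yt d n u i ^ (d - s)) * yg d n u i := by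
        rw [yS, Finset.mul_sum]
        exact Finset.sum_congr rfl fun s _ => key s
    _ = (∑ s ∈ Finset.range d, yt d n u (i + 1) ^ s * yt d n u i ^ (d - s)) *
          yg d n u i := by rw [Finset.sum_mul]
    _ = yS d n u i * yg d n u i := by
        rw [yS, ← sum_symm hd hc ha hb]

lemma yg_ye_comm {i : ℕ} (hd : 1 ≤ d) (hi : 1 ≤ i) (hi' : i ≤ n - 1) :
    yg d n u i * ye d n u i = ye d n u i * yg d n u i := by
  rw [ye_eq_yS, mul_smul_comm, smul_mul_assoc, yg_yS_comm d n u hd hi hi']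

lemma ye_sq {i : ℕ} (hd : 1 ≤ d) (hi : 1 ≤ i) (hi' : i ≤ n - 1) :
    ye d n u i * ye d n u i = ye d n u i := by
  have hin : i ≤ n := by omega
  have hin1 : i + 1 ≤ n := by omega
  have hc := yt_comm d n u hi hin (by omega : 1 ≤ i + 1) hin1
  have ha := yt_pow_d d n u hi hin
  have hb := yt_pow_d d n u (by omega : 1 ≤ i + 1) hin1
  have hS : yS d n u i * yS d n u i = d • yS d n u i := sum_sq hd hc ha hb
  have hd0 : (d : ℂ) ≠ 0 := Nat.cast_ne_zero.mpr (by omega)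
  rw [ye_eq_yS, smul_mul_assoc, mul_smul_comm, hS, ← Nat.cast_smul_eq_nsmul ℂ,
    smul_smul, smul_smul]
  congr 1
  field_simp

lemma yg_isUnit {i : ℕ} (hd : 1 ≤ d) (hu : u ≠ 0) (hi : 1 ≤ i) (hi' : i ≤ n - 1) :
    IsUnit (yg d n u i) := by
  set g := yg d n u i with hg
  set e := ye d n u i with he
  have hsq : g * g = 1 + (u - 1) • e + (u - 1) • (e * g) := by
    rw [← pow_two]; exact yg_sq d n u hi hi'
  have hge : g * e = e * g := yg_ye_comm d n u hd hi hi'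
  have hee : e * e = e := ye_sq d n u hd hi hi'
  have hegg : e * (g * g) = e + (u - 1) • e + (u - 1) • (e * g) := by
    rw [hsq, mul_add, mul_add, mul_one, mul_smul_comm, mul_smul_comm, hee,
      ← mul_assoc, hee]
  rw [isUnit_iff_exists]
  refine ⟨g + (u⁻¹ - 1) • e + (u⁻¹ - 1) • (e * g), ?_, ?_⟩
  · have expand : g * (g + (u⁻¹ - 1) • e + (u⁻¹ - 1) • (e * g)) =
        g * g + (u⁻¹ - 1) • (e * g) + (u⁻¹ - 1) • (e * (g * g)) := by
      rw [mul_add, mul_add, mul_smul_comm, mul_smul_comm, hge, ← mul_assoc, hge,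
        mul_assoc]
    rw [expand, hegg, hsq]
    match_scalars
    · ring
    · field_simp; ring
    · field_simp; ring
  · have expand : (g + (u⁻¹ - 1) • e + (u⁻¹ - 1) • (e * g)) * g =
        g * g + (u⁻¹ - 1) • (e * g) + (u⁻¹ - 1) • (e * (g * g)) := by
      rw [add_mul, add_mul, smul_mul_assoc, smul_mul_assoc, mul_assoc]
    rw [expand, hegg, hsq]
    match_scalars
    · ring
    · field_simp; ring
    · field_simp; ring

end EUnit

/-! ### The element `γ` and conjugation -/

section Gamma

variable (d n : ℕ) (u : ℂ)

/-- Partial product `g_a g_{a+1} ⋯ g_{a+b-1}`. -/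
def gp (a b : ℕ) : YH d n u := ((List.range' a b).map (yg d n u)).prod

lemma gp_append (a b c : ℕ) :
    gp d n u a b * gp d n u (a + b) c = gp d n u a (b + c) := by
  unfold gp
  rw [← List.prod_append, ← List.map_append]
  congr 2
  simpa [Nat.add_comm] using List.range'_append a b c 1

lemma gp_one (a : ℕ) : gp d n u a 1 = yg d n u a := by
  simp [gp, List.range']

lemma ygam_eq : ygam d n u = gp d n u 1 (n - 1) := by
  unfold ygam gp
  rw [List.range'_eq_map_range, List.map_map]
  congr 1
  exact List.map_congr_left fun k _ => by simp [Nat.add_comm]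

lemma gp_comm_yt {j a b : ℕ} (hj : 1 ≤ j) (hj' : j ≤ n)
    (h : ∀ k, a ≤ k → k < a + b → 1 ≤ k ∧ k ≤ n - 1 ∧ j ≠ k ∧ j ≠ k + 1) :
    gp d n u a b * yt d n u j = yt d n u j * gp d n u a b := by
  refine (Commute.list_prod_right _ _ ?_).eq.symm
  intro x hx
  rw [List.mem_map] at hx
  obtain ⟨k, hk, rfl⟩ := hx
  rw [List.mem_range'_1] at hk
  obtain ⟨h1, h2, h3, h4⟩ := h k hk.1 hk.2
  exact (yg_yt_other d n u h1 h2 hj hj' h3 h4).symm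

lemma gp_comm_yg {i a b : ℕ} (hi : 1 ≤ i) (hi' : i ≤ n - 1)
    (h : ∀ k, a ≤ k → k < a + b → 1 ≤ k ∧ k ≤ n - 1 ∧ (k + 1 < i ∨ i + 1 < k)) :
    gp d n u a b * yg d n u i = yg d n u i * gp d n u a b := by
  refine (Commute.list_prod_right _ _ ?_).eq.symm
  intro x hx
  rw [List.mem_map] at hx
  obtain ⟨k, hk, rfl⟩ := hx
  rw [List.mem_range'_1] at hk
  obtain ⟨h1, h2, h3⟩ := h k hk.1 hk.2
  rcases h3 with h3 | h3
  · exact (yg_gcomm d n u h1 h3 hi').symm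
  · exact yg_gcomm d n u hi h3 h2

lemma gam_yt {i : ℕ} (hn : 3 ≤ n) (hi : 1 ≤ i) (hi' : i ≤ n - 1) :
    ygam d n u * yt d n u i = yt d n u (i + 1) * ygam d n u := by
  obtain ⟨c, hc⟩ : ∃ c, n - 1 = (i - 1) + 1 + c := ⟨n - 1 - i, by omega⟩
  have hsplit : ygam d n u = gp d n u 1 (i - 1) * (yg d n u i * gp d n u (i + 1) c) := by
    rw [ygam_eq, hc, ← gp_append, ← gp_append, gp_one,
      show 1 + (i - 1) = i by omega, show 1 + (i - 1 + 1) = i + 1 by omega, mul_assoc]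
  have h1 : gp d n u (i + 1) c * yt d n u i = yt d n u i * gp d n u (i + 1) c :=
    gp_comm_yt d n u hi (by omega) (fun k hk1 hk2 => by omega)
  have h2 : yg d n u i * yt d n u i = yt d n u (i + 1) * yg d n u i :=
    yg_yt_i d n u hi hi'
  have h3 : gp d n u 1 (i - 1) * yt d n u (i + 1) = yt d n u (i + 1) * gp d n u 1 (i - 1) :=
    gp_comm_yt d n u (by omega) (by omega) (fun k hk1 hk2 => by omega)
  rw [hsplit]
  exact mul_shift (mul_shift h1 h2) h3

lemma gam_yg {i : ℕ} (hn : 3 ≤ n) (hi : 1 ≤ i) (hi' : i ≤ n - 2) :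
    ygam d n u * yg d n u i = yg d n u (i + 1) * ygam d n u := by
  obtain ⟨c, hc⟩ : ∃ c, n - 1 = (i - 1) + 1 + 1 + c := ⟨n - 1 - (i + 1), by omega⟩
  have hsplit : ygam d n u =
      gp d n u 1 (i - 1) * (yg d n u i * (yg d n u (i + 1) * gp d n u (i + 2) c)) := by
    rw [ygam_eq, hc, ← gp_append, ← gp_append, ← gp_append, gp_one, gp_one,
      show 1 + (i - 1) = i by omega, show 1 + (i - 1 + 1) = i + 1 by omega,
      show 1 + (i - 1 + 1 + 1) = i + 2 by omega, mul_assoc, mul_assoc]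
  have h1 : gp d n u (i + 2) c * yg d n u i = yg d n u i * gp d n u (i + 2) c :=
    gp_comm_yg d n u hi (by omega) (fun k hk1 hk2 => by omega)
  have hbr := yg_braid d n u hi (by omega : i + 1 ≤ n - 1)
  have inner : (yg d n u i * (yg d n u (i + 1) * gp d n u (i + 2) c)) * yg d n u i =
      yg d n u (i + 1) * (yg d n u i * (yg d n u (i + 1) * gp d n u (i + 2) c)) := by
    calc (yg d n u i * (yg d n u (i + 1) * gp d n u (i + 2) c)) * yg d n u i
        = yg d n u i * (yg d n u (i + 1) * (gp d n u (i + 2) c * yg d n u i)) := by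
          simp only [mul_assoc]
      _ = yg d n u i * (yg d n u (i + 1) * (yg d n u i * gp d n u (i + 2) c)) := by
          rw [h1]
      _ = (yg d n u i * yg d n u (i + 1) * yg d n u i) * gp d n u (i + 2) c := by
          simp only [mul_assoc]
      _ = (yg d n u (i + 1) * yg d n u i * yg d n u (i + 1)) * gp d n u (i + 2) c := by
          rw [hbr]
      _ = yg d n u (i + 1) * (yg d n u i * (yg d n u (i + 1) * gp d n u (i + 2) c)) := by
          simp only [mul_assoc]
  have h3 : gp d n u 1 (i - 1) * yg d n u (i + 1) =
      yg d n u (i + 1) * gp d n u 1 (i - 1) :=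
    gp_comm_yg d n u (by omega) (by omega) (fun k hk1 hk2 => by omega)
  rw [hsplit]
  exact mul_shift inner h3

lemma gam_isUnit (hd : 1 ≤ d) (hu : u ≠ 0) : IsUnit (ygam d n u) := by
  refine List.prod_isUnit ?_
  intro x hx
  rw [List.mem_map] at hx
  obtain ⟨k, hk, rfl⟩ := hx
  rw [List.mem_range] at hk
  exact yg_isUnit d n u hd hu (by omega) (by omega)

end Gamma

/-! ### Conjugation of `c_{i,i+1}` by `γ` and the main statement -/

section Main

variable (d n : ℕ) (u : ℂ)

lemma gam_yt_pow {i : ℕ} (hn : 3 ≤ n) (hi : 1 ≤ i) (hi' : i ≤ n - 1) (k : ℕ) :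
    ygam d n u * yt d n u i ^ k = yt d n u (i + 1) ^ k * ygam d n u :=
  mul_pow_shift (gam_yt d n u hn hi hi') k

lemma gam_sum_t {i : ℕ} (hn : 3 ≤ n) (hi : 1 ≤ i) (hi' : i ≤ n - 1) :
    ygam d n u * (∑ k ∈ Finset.range d, yt d n u i ^ k) =
      (∑ k ∈ Finset.range d, yt d n u (i + 1) ^ k) * ygam d n u := by
  rw [Finset.mul_sum, Finset.sum_mul]
  exact Finset.sum_congr rfl fun k _ => gam_yt_pow d n u hn hi hi' k

lemma gam_ye {i : ℕ} (hn : 3 ≤ n) (hi : 1 ≤ i) (hi' : i + 1 ≤ n - 1) :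
    ygam d n u * ye d n u i = ye d n u (i + 1) * ygam d n u := by
  rw [ye_eq_yS, ye_eq_yS, mul_smul_comm, smul_mul_assoc]
  congr 1
  rw [yS, yS, Finset.mul_sum, Finset.sum_mul]
  exact Finset.sum_congr rfl fun s _ =>
    shift_mul (mul_pow_shift (gam_yt d n u hn hi (by omega)) s)
      (mul_pow_shift (gam_yt d n u hn (by omega) hi') (d - s))

lemma gam_ygSt {i : ℕ} (hn : 3 ≤ n) (hi : 1 ≤ i) (hi' : i + 1 ≤ n - 2) :
    ygam d n u * ygSt d n u i = ygSt d n u (i + 1) * ygam d n u := by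
  have hA : ygam d n u * yg d n u i = yg d n u (i + 1) * ygam d n u :=
    gam_yg d n u hn hi (by omega)
  have hB : ygam d n u * yg d n u (i + 1) = yg d n u (i + 1 + 1) * ygam d n u :=
    gam_yg d n u hn (by omega) hi'
  have e1 : ygam d n u * (1 : YH d n u) = 1 * ygam d n u := by
    rw [mul_one, one_mul]
  have e3 := shift_mul hA hB
  have e4 := shift_mul hB hA
  have e5 := shift_mul e3 hA
  unfold ygSt
  simp only [mul_add]
  rw [e1, hA, hB, e3, e4, e5]
  simp only [add_mul]

lemma gam_yc {i : ℕ} (hn : 3 ≤ n) (hi : 1 ≤ i) (hi' : i ≤ n - 3) :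
    ygam d n u * yc d n u i = yc d n u (i + 1) * ygam d n u := by
  unfold yc
  exact shift_mul (gam_sum_t d n u hn hi (by omega))
    (shift_mul (shift_mul (gam_ye d n u hn hi (by omega))
      (gam_ye d n u hn (by omega) (by omega)))
      (gam_ygSt d n u hn hi (by omega)))

lemma gam_pow_yc (hn : 3 ≤ n) :
    ∀ i : ℕ, 1 ≤ i → i ≤ n - 2 →
      ygam d n u ^ (i - 1) * yc d n u 1 = yc d n u i * ygam d n u ^ (i - 1) := by
  suffices H : ∀ m : ℕ, m + 1 ≤ n - 2 →
      ygam d n u ^ m * yc d n u 1 = yc d n u (m + 1) * ygam d n u ^ m by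
    intro i hi1 hi2
    obtain ⟨m, rfl⟩ : ∃ m, i = m + 1 := ⟨i - 1, by omega⟩
    simpa using H m hi2
  intro m
  induction m with
  | zero => intro _; simp
  | succ m ih =>
      intro hm
      have ih' := ih (by omega)
      rw [pow_succ', mul_assoc, ih', ← mul_assoc,
        gam_yc d n u hn (by omega) (by omega), mul_assoc, ← pow_succ']

lemma yc_mem (hd : 1 ≤ d) (hn : 3 ≤ n) (hu : u ≠ 0) {i j : ℕ}
    (hi1 : 1 ≤ i) (hi2 : i ≤ n - 2) (hj1 : 1 ≤ j) (hj2 : j ≤ n - 2) :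
    yc d n u i ∈ TwoSidedIdeal.span {yc d n u j} := by
  obtain ⟨v, hv1, hv2⟩ := isUnit_iff_exists.mp (gam_isUnit d n u hd hu)
  have hgv : ygam d n u ^ (i - 1) * v ^ (i - 1) = 1 := mul_pow_eq_one hv1 _
  have hvg : v ^ (j - 1) * ygam d n u ^ (j - 1) = 1 := mul_pow_eq_one hv2 _
  have e1 : yc d n u i = ygam d n u ^ (i - 1) * yc d n u 1 * v ^ (i - 1) := by
    rw [gam_pow_yc d n u hn i hi1 hi2, mul_assoc, hgv, mul_one]
  have e2 : yc d n u 1 = v ^ (j - 1) * (yc d n u j * ygam d n u ^ (j - 1)) := by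
    calc yc d n u 1 = (v ^ (j - 1) * ygam d n u ^ (j - 1)) * yc d n u 1 := by
          rw [hvg, one_mul]
      _ = v ^ (j - 1) * (ygam d n u ^ (j - 1) * yc d n u 1) := by rw [mul_assoc]
      _ = v ^ (j - 1) * (yc d n u j * ygam d n u ^ (j - 1)) := by
          rw [gam_pow_yc d n u hn j hj1 hj2]
  have e3 : yc d n u i = (ygam d n u ^ (i - 1) * v ^ (j - 1)) *
      (yc d n u j * (ygam d n u ^ (j - 1) * v ^ (i - 1))) := by
    rw [e1, e2]; simp only [mul_assoc]
  rw [e3]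
  exact (TwoSidedIdeal.span _).mul_mem_left _ _
    ((TwoSidedIdeal.span _).mul_mem_right _ _
      (TwoSidedIdeal.subset_span (Set.mem_singleton _)))

end Main

end YHAux
/-- In `Y_{d,n}(u)`, for each fixed `1 ≤ j ≤ n-2`, the two-sided ideal
generated by `{c_{i,i+1} : 1 ≤ i ≤ n-2}` equals the two-sided ideal generated by the
single element `c_{j,j+1}`; moreover `γ^{i-1} c_{1,2} = c_{i,i+1} γ^{i-1}` for all
`1 ≤ i ≤ n-2`, where `γ = g_1 ⋯ g_{n-1}`. -/
theorem stmt5 (d n : ℕ) (hd : 1 ≤ d) (hn : 3 ≤ n) (u : ℂ) (hu : u ≠ 0) :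
    (∀ j : ℕ, 1 ≤ j → j ≤ n - 2 →
      TwoSidedIdeal.span {a : YH d n u | ∃ i : ℕ, 1 ≤ i ∧ i ≤ n - 2 ∧ a = yc d n u i} =
        TwoSidedIdeal.span {yc d n u j}) ∧
    (∀ i : ℕ, 1 ≤ i → i ≤ n - 2 →
      ygam d n u ^ (i - 1) * yc d n u 1 = yc d n u i * ygam d n u ^ (i - 1)) := by
  constructor
  · intro j hj1 hj2
    apply le_antisymm
    · intro x hx
      rw [TwoSidedIdeal.mem_span_iff] at hx
      apply hx
      intro a ha
      obtain ⟨i, hi1, hi2, rfl⟩ := ha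
      exact YHAux.yc_mem d n u hd hn hu hi1 hi2 hj1 hj2
    · refine TwoSidedIdeal.span_mono ?_
      intro a ha
      rw [Set.mem_singleton_iff] at ha
      exact ⟨j, hj1, hj2, ha⟩
  · exact YHAux.gam_pow_yc d n u hn
end
end

section
/- In the Yokonuma–Hecke algebra Y_{d,n}(u) (n ≥ 3) the following identities hold for the element c_{1,2}: (1) g_1 c_{1,2} = [1 + (u−1)e_1] c_{1,2}; (2) g_2 c_{1,2} = [1 + (u−1)e_2] c_{1,2}; (3) g_1 g_2 c_{1,2} = [1 + (u−1)e_1 + (u−1)e_{1,3} + (u−1)² e_1 e_2] c_{1,2}; (4) g_2 g_1 c_{1,2} = [1 + (u−1)e_2 + (u−1)e_{1,3} + (u−1)² e_1 e_2] c_{1,2}; (5) g_1 g_2 g_1 c_{1,2} = [1 + (u−1)(e_1 + e_2 + e_{1,3}) + (u−1)²(u+2) e_1 e_2] c_{1,2}. -/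
noncomputable section

open scoped BigOperators

section RingLemmas
variable {R : Type*} [Ring R]

lemma yh_g_pow_swap {g a a' : R} (h : g * a = a' * g) (k : ℕ) :
    g * a ^ k = a' ^ k * g := by
  induction k with
  | zero => simp
  | succ k ih =>
    rw [pow_succ', ← mul_assoc, h, mul_assoc, ih, ← mul_assoc, ← pow_succ']

lemma yh_sum_shift {d : ℕ} {a b : R} (hab : a * b = b * a)
    (ha : a ^ d = 1) (hb : b ^ d = 1) :
    (∑ s ∈ Finset.range d, a ^ s * b ^ (d - s)) * a
      = (∑ s ∈ Finset.range d, a ^ s * b ^ (d - s)) * b := by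
  have hC : Commute a b := hab
  set f : ℕ → R := fun s => a ^ s * b ^ (d + 1 - s) with hf
  have hfd0 : f d = f 0 := by
    simp only [hf, ha, pow_zero, one_mul, mul_one, Nat.add_sub_cancel_left, Nat.sub_zero,
      Nat.add_sub_cancel, pow_one, pow_succ, hb]
  have key : ∑ s ∈ Finset.range d, f (s + 1) = ∑ s ∈ Finset.range d, f s := by
    have h1 := Finset.sum_range_succ f d
    have h2 := Finset.sum_range_succ' f d
    rw [h1, hfd0] at h2
    exact (add_right_cancel h2.symm)
  calc (∑ s ∈ Finset.range d, a ^ s * b ^ (d - s)) * a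
      = ∑ s ∈ Finset.range d, f (s + 1) := by
        rw [Finset.sum_mul]
        refine Finset.sum_congr rfl fun s hs => ?_
        rw [mul_assoc, ((hC.symm).pow_left (d - s)).eq, ← mul_assoc, ← pow_succ]
        simp only [hf]
        congr 2
        omega
    _ = ∑ s ∈ Finset.range d, f s := key
    _ = (∑ s ∈ Finset.range d, a ^ s * b ^ (d - s)) * b := by
        rw [Finset.sum_mul]
        refine (Finset.sum_congr rfl fun s hs => ?_).symm
        rw [mul_assoc, ← pow_succ]
        simp only [hf]
        congr 2
        simp only [Finset.mem_range] at hs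
        omega

lemma yh_sum_symm {d : ℕ} {a b : R} (hab : a * b = b * a)
    (ha : a ^ d = 1) (hb : b ^ d = 1) :
    ∑ s ∈ Finset.range d, a ^ s * b ^ (d - s)
      = ∑ s ∈ Finset.range d, b ^ s * a ^ (d - s) := by
  rcases Nat.eq_zero_or_pos d with hd0 | hd0
  · simp [hd0]
  have hC : Commute a b := hab
  refine Finset.sum_nbij' (fun s => (d - s) % d) (fun s => (d - s) % d) ?_ ?_ ?_ ?_ ?_
  · intro s _; simpa using Nat.mod_lt _ hd0
  · intro s _; simpa using Nat.mod_lt _ hd0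
  · intro s hs
    simp only [Finset.mem_range] at hs
    rcases Nat.eq_zero_or_pos s with h0 | h0
    · simp [h0, Nat.mod_self]
    · rw [Nat.mod_eq_of_lt (show d - s < d by omega), Nat.sub_sub_self hs.le, Nat.mod_eq_of_lt hs]
  · intro s hs
    simp only [Finset.mem_range] at hs
    rcases Nat.eq_zero_or_pos s with h0 | h0
    · simp [h0, Nat.mod_self]
    · rw [Nat.mod_eq_of_lt (show d - s < d by omega), Nat.sub_sub_self hs.le, Nat.mod_eq_of_lt hs]
  · intro s hs
    simp only [Finset.mem_range] at hs
    rcases Nat.eq_zero_or_pos s with h0 | h0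
    · simp [h0, ha, hb]
    · rw [Nat.mod_eq_of_lt (show d - s < d by omega), Nat.sub_sub_self hs.le,
        (hC.pow_pow s (d - s)).eq]

end RingLemmas
section YHLemmas

variable {d n : ℕ} {u : ℂ}

lemma commute_smul_right {R : Type*} [Ring R] {a b : R} (h : Commute a b) (r : ℂ) [Module ℂ R] [SMulCommClass ℂ R R] [IsScalarTower ℂ R R] : Commute a (r • b) := by
  show a * (r • b) = (r • b) * a
  rw [mul_smul_comm, smul_mul_assoc, h.eq]

lemma tt_comm {i j : ℕ} (hi : 1 ≤ i) (hi' : i ≤ n) (hj : 1 ≤ j) (hj' : j ≤ n) :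
    yt d n u i * yt d n u j = yt d n u j * yt d n u i := by
  simpa only [map_mul, yt] using
    RingQuot.mkAlgHom_rel ℂ (YHRel.t_comm (d := d) (u := u) hi hi' hj hj')

lemma tpow {i : ℕ} (hi : 1 ≤ i) (hi' : i ≤ n) : yt d n u i ^ d = 1 := by
  simpa only [map_pow, map_one, yt] using
    RingQuot.mkAlgHom_rel ℂ (YHRel.t_pow (d := d) (u := u) hi hi')

lemma gt_swap {i : ℕ} (hi : 1 ≤ i) (hi' : i ≤ n - 1) :
    yg d n u i * yt d n u i = yt d n u (i + 1) * yg d n u i := by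
  simpa only [map_mul, yt, yg] using
    RingQuot.mkAlgHom_rel ℂ (YHRel.g_t (d := d) (u := u) hi hi')

lemma gt_swap' {i : ℕ} (hi : 1 ≤ i) (hi' : i ≤ n - 1) :
    yg d n u i * yt d n u (i + 1) = yt d n u i * yg d n u i := by
  simpa only [map_mul, yt, yg] using
    RingQuot.mkAlgHom_rel ℂ (YHRel.g_t' (d := d) (u := u) hi hi')

lemma gt_comm {i j : ℕ} (hi : 1 ≤ i) (hi' : i ≤ n - 1) (hj : 1 ≤ j) (hj' : j ≤ n)
    (h1 : j ≠ i) (h2 : j ≠ i + 1) :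
    yg d n u i * yt d n u j = yt d n u j * yg d n u i := by
  simpa only [map_mul, yt, yg] using
    RingQuot.mkAlgHom_rel ℂ (YHRel.g_t_comm (d := d) (u := u) hi hi' hj hj' h1 h2)

lemma braid12 (hn : 3 ≤ n) :
    yg d n u 1 * yg d n u 2 * yg d n u 1 = yg d n u 2 * yg d n u 1 * yg d n u 2 := by
  have h2 : (1 : ℕ) + 1 ≤ n - 1 := by omega
  simpa only [map_mul, yg, Nat.reduceAdd] using
    RingQuot.mkAlgHom_rel ℂ (YHRel.braid (d := d) (u := u) (i := 1) le_rfl h2)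

lemma map_eF_eq (i : ℕ) :
    RingQuot.mkAlgHom ℂ (YHRel d n u) (eF d n i) = ye d n u i := by
  simp only [eF, ye, map_smul, map_sum, map_mul, map_pow, yt]

lemma gsq {i : ℕ} (hi : 1 ≤ i) (hi' : i ≤ n - 1) :
    yg d n u i * yg d n u i
      = 1 + (u - 1) • ye d n u i + (u - 1) • (ye d n u i * yg d n u i) := by
  have := RingQuot.mkAlgHom_rel ℂ (YHRel.quad (d := d) (u := u) hi hi')
  simp only [map_pow, map_add, map_one, map_smul, map_mul, map_eF_eq, pow_two] at this
  exact this

lemma t_comm_eij {k i j : ℕ} (hk : 1 ≤ k) (hk' : k ≤ n) (hi : 1 ≤ i) (hi' : i ≤ n)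
    (hj : 1 ≤ j) (hj' : j ≤ n) : Commute (yt d n u k) (yeij d n u i j) := by
  unfold yeij
  refine commute_smul_right ?_ _
  refine Commute.sum_right (R := YH d n u) (Finset.range d)
    (fun s => yt d n u i ^ s * yt d n u j ^ (d - s)) (yt d n u k) fun s _ => ?_
  have c1 : Commute (yt d n u k) (yt d n u i) := tt_comm hk hk' hi hi'
  have c2 : Commute (yt d n u k) (yt d n u j) := tt_comm hk hk' hj hj'
  exact (c1.pow_right s).mul_right (c2.pow_right (d - s))

lemma eij_comm_eij {i j k l : ℕ} (hi : 1 ≤ i) (hi' : i ≤ n) (hj : 1 ≤ j) (hj' : j ≤ n)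
    (hk : 1 ≤ k) (hk' : k ≤ n) (hl : 1 ≤ l) (hl' : l ≤ n) :
    Commute (yeij d n u i j) (yeij d n u k l) := by
  conv_rhs => rw [yeij]
  refine commute_smul_right ?_ _
  refine Commute.sum_right (R := YH d n u) (Finset.range d)
    (fun s => yt d n u k ^ s * yt d n u l ^ (d - s)) (yeij d n u i j) fun s _ => ?_
  have c1 : Commute (yeij d n u i j) (yt d n u k) :=
    (t_comm_eij hk hk' hi hi' hj hj').symm
  have c2 : Commute (yeij d n u i j) (yt d n u l) :=
    (t_comm_eij hl hl' hi hi' hj hj').symm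
  exact (c1.pow_right s).mul_right (c2.pow_right (d - s))

lemma g_mul_eij {g : YH d n u} {i j i' j' : ℕ}
    (h1 : g * yt d n u i = yt d n u i' * g) (h2 : g * yt d n u j = yt d n u j' * g) :
    g * yeij d n u i j = yeij d n u i' j' * g := by
  unfold yeij
  rw [mul_smul_comm, smul_mul_assoc, Finset.mul_sum, Finset.sum_mul]
  congr 1
  refine Finset.sum_congr rfl fun s _ => ?_
  rw [← mul_assoc, yh_g_pow_swap h1, mul_assoc, yh_g_pow_swap h2, ← mul_assoc]

lemma eij_symm {i j : ℕ} (hi : 1 ≤ i) (hi' : i ≤ n) (hj : 1 ≤ j) (hj' : j ≤ n) :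
    yeij d n u i j = yeij d n u j i := by
  unfold yeij
  congr 1
  exact yh_sum_symm (tt_comm hi hi' hj hj') (tpow hi hi') (tpow hj hj')

lemma eij_shift_pow {i j : ℕ} (hi : 1 ≤ i) (hi' : i ≤ n) (hj : 1 ≤ j) (hj' : j ≤ n)
    (k : ℕ) :
    yeij d n u i j * yt d n u i ^ k = yeij d n u i j * yt d n u j ^ k := by
  have base : yeij d n u i j * yt d n u i = yeij d n u i j * yt d n u j := by
    unfold yeij
    rw [smul_mul_assoc, smul_mul_assoc]
    congr 1
    exact yh_sum_shift (tt_comm hi hi' hj hj') (tpow hi hi') (tpow hj hj')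
  induction k with
  | zero => simp
  | succ k ih =>
    have hc : Commute (yt d n u i) (yt d n u j) := tt_comm hi hi' hj hj'
    have hC : Commute (yt d n u i) (yt d n u j ^ k) := hc.pow_right k
    rw [pow_succ, ← mul_assoc, ih, mul_assoc, ← hC.eq, ← mul_assoc, base, mul_assoc,
      ← pow_succ']

lemma absorb_left {A : YH d n u} {i j k : ℕ}
    (hsh : ∀ s : ℕ, A * yt d n u i ^ s = A * yt d n u j ^ s) :
    A * yeij d n u i k = A * yeij d n u j k := by
  unfold yeij
  rw [mul_smul_comm, mul_smul_comm]
  congr 1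
  rw [Finset.mul_sum, Finset.mul_sum]
  exact Finset.sum_congr rfl fun s _ => by rw [← mul_assoc, hsh, mul_assoc]

lemma absorb_right {A : YH d n u} {k i j : ℕ}
    (hsh : ∀ s : ℕ, A * yt d n u i ^ s = A * yt d n u j ^ s)
    (hci : Commute (yt d n u k) (yt d n u i))
    (hcj : Commute (yt d n u k) (yt d n u j)) :
    A * yeij d n u k i = A * yeij d n u k j := by
  unfold yeij
  rw [mul_smul_comm, mul_smul_comm]
  congr 1
  rw [Finset.mul_sum, Finset.mul_sum]
  refine Finset.sum_congr rfl fun s _ => ?_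
  rw [(hci.pow_pow s (d - s)).eq, ← mul_assoc, hsh, mul_assoc,
    ← (hcj.pow_pow s (d - s)).eq]

lemma absorb_full {A : YH d n u} {i j : ℕ} (hd : 1 ≤ d)
    (hsh : ∀ s : ℕ, A * yt d n u i ^ s = A * yt d n u j ^ s)
    (hj : 1 ≤ j) (hj' : j ≤ n) :
    A * yeij d n u i j = A := by
  unfold yeij
  rw [mul_smul_comm, Finset.mul_sum]
  have h : ∀ s ∈ Finset.range d, A * (yt d n u i ^ s * yt d n u j ^ (d - s)) = A := by
    intro s hs
    simp only [Finset.mem_range] at hs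
    rw [← mul_assoc, hsh, mul_assoc, ← pow_add, show s + (d - s) = d by omega,
      tpow hj hj', mul_one]
  rw [Finset.sum_congr rfl h, Finset.sum_const, Finset.card_range,
    ← Nat.cast_smul_eq_nsmul ℂ, smul_smul,
    inv_mul_cancel₀ (Nat.cast_ne_zero.mpr (by omega)), one_smul]

end YHLemmas
section Helpers

lemma yh_push {R : Type*} [Semigroup R] {g a a' g' : R} (h : g * a = a' * g') (X : R) :
    g * (a * X) = a' * (g' * X) := by rw [← mul_assoc, h, mul_assoc]

lemma yh_fuse {R : Type*} [Semigroup R] {a b c : R} (h : a * b = c) (X : R) :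
    a * (b * X) = c * X := by rw [← mul_assoc, h]

end Helpers

section Concrete

variable {d n : ℕ} {u : ℂ}

lemma g1t1 (hn : 3 ≤ n) : yg d n u 1 * yt d n u 1 = yt d n u 2 * yg d n u 1 :=
  gt_swap le_rfl (by omega)

lemma g1t2 (hn : 3 ≤ n) : yg d n u 1 * yt d n u 2 = yt d n u 1 * yg d n u 1 :=
  gt_swap' le_rfl (by omega)

lemma g1t3 (hn : 3 ≤ n) : yg d n u 1 * yt d n u 3 = yt d n u 3 * yg d n u 1 :=
  gt_comm le_rfl (by omega) (by omega) hn (by omega) (by omega)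

lemma g2t1 (hn : 3 ≤ n) : yg d n u 2 * yt d n u 1 = yt d n u 1 * yg d n u 2 :=
  gt_comm (i := 2) (by omega) (by omega) le_rfl (by omega) (by omega) (by omega)

lemma g2t2 (hn : 3 ≤ n) : yg d n u 2 * yt d n u 2 = yt d n u 3 * yg d n u 2 :=
  gt_swap (i := 2) (by omega) (by omega)

lemma g2t3 (hn : 3 ≤ n) : yg d n u 2 * yt d n u 3 = yt d n u 2 * yg d n u 2 :=
  gt_swap' (i := 2) (by omega) (by omega)

lemma hgE1 (hn : 3 ≤ n) : yg d n u 1 * ye d n u 1 = ye d n u 1 * yg d n u 1 := by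
  have h : yg d n u 1 * yeij d n u 1 2 = yeij d n u 2 1 * yg d n u 1 :=
    g_mul_eij (g1t1 hn) (g1t2 hn)
  rw [show ye d n u 1 = yeij d n u 1 2 from rfl, h,
    eij_symm (i := 2) (j := 1) (by omega) (by omega) le_rfl (by omega)]

lemma hgE2 (hn : 3 ≤ n) : yg d n u 1 * ye d n u 2 = yeij d n u 1 3 * yg d n u 1 := by
  have h : yg d n u 1 * yeij d n u 2 3 = yeij d n u 1 3 * yg d n u 1 :=
    g_mul_eij (g1t2 hn) (g1t3 hn)
  rw [show ye d n u 2 = yeij d n u 2 3 from rfl, h]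

lemma hg2E1 (hn : 3 ≤ n) : yg d n u 2 * ye d n u 1 = yeij d n u 1 3 * yg d n u 2 := by
  have h : yg d n u 2 * yeij d n u 1 2 = yeij d n u 1 3 * yg d n u 2 :=
    g_mul_eij (g2t1 hn) (g2t2 hn)
  rw [show ye d n u 1 = yeij d n u 1 2 from rfl, h]

lemma hg2E2 (hn : 3 ≤ n) : yg d n u 2 * ye d n u 2 = ye d n u 2 * yg d n u 2 := by
  have h : yg d n u 2 * yeij d n u 2 3 = yeij d n u 3 2 * yg d n u 2 :=
    g_mul_eij (g2t2 hn) (g2t3 hn)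
  rw [show ye d n u 2 = yeij d n u 2 3 from rfl, h,
    eij_symm (i := 3) (j := 2) (by omega) hn (by omega) (by omega)]

lemma hE1sq (hd : 1 ≤ d) (hn : 3 ≤ n) : ye d n u 1 * ye d n u 1 = ye d n u 1 :=
  absorb_full hd (fun s => eij_shift_pow le_rfl (by omega) (by omega) (by omega) s)
    (by omega) (by omega)

lemma hE2sq (hd : 1 ≤ d) (hn : 3 ≤ n) : ye d n u 2 * ye d n u 2 = ye d n u 2 :=
  absorb_full hd (fun s => eij_shift_pow (i := 2) (j := 3) (by omega) (by omega) (by omega) hn s)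
    (by omega) hn

lemma hE1E13 (hd : 1 ≤ d) (hn : 3 ≤ n) :
    ye d n u 1 * yeij d n u 1 3 = ye d n u 1 * ye d n u 2 :=
  absorb_left (fun s => eij_shift_pow (i := 1) (j := 2) le_rfl (by omega) (by omega) (by omega) s)

lemma commE1E2 (hn : 3 ≤ n) : Commute (ye d n u 1) (ye d n u 2) :=
  eij_comm_eij le_rfl (by omega) (by omega) (by omega) (by omega) (by omega) (by omega) hn

lemma commE13E1 (hn : 3 ≤ n) : Commute (yeij d n u 1 3) (ye d n u 1) :=
  eij_comm_eij le_rfl (by omega) (by omega) hn le_rfl (by omega) (by omega) (by omega)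

lemma commE13E2 (hn : 3 ≤ n) : Commute (yeij d n u 1 3) (ye d n u 2) :=
  eij_comm_eij le_rfl (by omega) (by omega) hn (by omega) (by omega) (by omega) hn

lemma hE2E13 (hd : 1 ≤ d) (hn : 3 ≤ n) :
    ye d n u 2 * yeij d n u 1 3 = ye d n u 1 * ye d n u 2 := by
  have h1 : ye d n u 2 * yeij d n u 1 3 = ye d n u 2 * yeij d n u 1 2 :=
    absorb_right (k := 1) (i := 3) (j := 2) (fun s => (eij_shift_pow (i := 2) (j := 3) (by omega) (by omega)
        (by omega) hn s).symm)
      (tt_comm le_rfl (by omega) (by omega) hn)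
      (tt_comm le_rfl (by omega) (by omega) (by omega))
  rw [h1, show ye d n u 1 = yeij d n u 1 2 from rfl]
  exact (eij_comm_eij (i := 2) (j := 3) (k := 1) (l := 2) (by omega) (by omega) (by omega) hn
    le_rfl (by omega) (by omega) (by omega)).eq

lemma hE13E2 (hd : 1 ≤ d) (hn : 3 ≤ n) :
    yeij d n u 1 3 * ye d n u 2 = ye d n u 1 * ye d n u 2 :=
  ((commE13E2 hn).eq).trans (hE2E13 hd hn)

lemma commE1S1 (hn : 3 ≤ n) :
    Commute (ye d n u 1) (∑ k ∈ Finset.range d, yt d n u 1 ^ k) :=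
  Commute.sum_right _ _ _ fun k _ =>
    ((t_comm_eij (k := 1) (i := 1) (j := 2) le_rfl (by omega) le_rfl (by omega) (by omega)
      (by omega)).symm).pow_right k

lemma commE2S1 (hn : 3 ≤ n) :
    Commute (ye d n u 2) (∑ k ∈ Finset.range d, yt d n u 1 ^ k) :=
  Commute.sum_right _ _ _ fun k _ =>
    ((t_comm_eij (k := 1) (i := 2) (j := 3) le_rfl (by omega) (by omega) (by omega) (by omega)
      hn).symm).pow_right k

lemma commE13S1 (hn : 3 ≤ n) :
    Commute (yeij d n u 1 3) (∑ k ∈ Finset.range d, yt d n u 1 ^ k) :=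
  Commute.sum_right _ _ _ fun k _ =>
    ((t_comm_eij (k := 1) (i := 1) (j := 3) le_rfl (by omega) le_rfl (by omega) (by omega)
      hn).symm).pow_right k

lemma hgS1 (hn : 3 ≤ n) :
    yg d n u 1 * (∑ k ∈ Finset.range d, yt d n u 1 ^ k)
      = (∑ k ∈ Finset.range d, yt d n u 2 ^ k) * yg d n u 1 := by
  rw [Finset.mul_sum, Finset.sum_mul]
  exact Finset.sum_congr rfl fun k _ => yh_g_pow_swap (g1t1 hn) k

lemma hg2S1 (hn : 3 ≤ n) :
    yg d n u 2 * (∑ k ∈ Finset.range d, yt d n u 1 ^ k)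
      = (∑ k ∈ Finset.range d, yt d n u 1 ^ k) * yg d n u 2 := by
  rw [Finset.mul_sum, Finset.sum_mul]
  exact Finset.sum_congr rfl fun k _ => yh_g_pow_swap (g2t1 hn) k

lemma hS2E1 (hn : 3 ≤ n) :
    (∑ k ∈ Finset.range d, yt d n u 2 ^ k) * ye d n u 1
      = (∑ k ∈ Finset.range d, yt d n u 1 ^ k) * ye d n u 1 := by
  rw [show ye d n u 1 = yeij d n u 1 2 from rfl, Finset.sum_mul, Finset.sum_mul]
  refine Finset.sum_congr rfl fun k _ => ?_
  have c2 : Commute (yt d n u 2) (yeij d n u 1 2) :=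
    t_comm_eij (by omega) (by omega) le_rfl (by omega) (by omega) (by omega)
  have c1 : Commute (yt d n u 1) (yeij d n u 1 2) :=
    t_comm_eij le_rfl (by omega) le_rfl (by omega) (by omega) (by omega)
  calc yt d n u 2 ^ k * yeij d n u 1 2
      = yeij d n u 1 2 * yt d n u 2 ^ k := (c2.pow_left k).eq
    _ = yeij d n u 1 2 * yt d n u 1 ^ k :=
        (eij_shift_pow (i := 1) (j := 2) le_rfl (by omega) (by omega) (by omega) k).symm
    _ = yt d n u 1 ^ k * yeij d n u 1 2 := ((c1.pow_left k).eq).symm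

lemma gH1 (hn : 3 ≤ n) :
    yg d n u 1 * ygSt d n u 1
      = ygSt d n u 1 + (u - 1) • (ye d n u 1 * ygSt d n u 1) := by
  have q : yg d n u 1 * yg d n u 1
      = 1 + (u - 1) • ye d n u 1 + (u - 1) • (ye d n u 1 * yg d n u 1) :=
    gsq le_rfl (by omega)
  have hq : ∀ X : YH d n u, yg d n u 1 * (yg d n u 1 * X)
      = X + (u - 1) • (ye d n u 1 * X) + (u - 1) • (ye d n u 1 * (yg d n u 1 * X)) := by
    intro X
    rw [← mul_assoc, q, add_mul, add_mul, one_mul, smul_mul_assoc, smul_mul_assoc, mul_assoc]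
  simp only [ygSt, Nat.reduceAdd]
  simp only [mul_add, mul_one, add_mul, one_mul, smul_add, mul_smul_comm, smul_mul_assoc,
    mul_assoc]
  rw [hq (yg d n u 2), hq (yg d n u 2 * yg d n u 1), q]
  abel

lemma gH2 (hn : 3 ≤ n) :
    yg d n u 2 * ygSt d n u 1
      = ygSt d n u 1 + (u - 1) • (ye d n u 2 * ygSt d n u 1) := by
  have q : yg d n u 2 * yg d n u 2
      = 1 + (u - 1) • ye d n u 2 + (u - 1) • (ye d n u 2 * yg d n u 2) :=
    gsq (i := 2) (by omega) (by omega)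
  have hq : ∀ X : YH d n u, yg d n u 2 * (yg d n u 2 * X)
      = X + (u - 1) • (ye d n u 2 * X) + (u - 1) • (ye d n u 2 * (yg d n u 2 * X)) := by
    intro X
    rw [← mul_assoc, q, add_mul, add_mul, one_mul, smul_mul_assoc, smul_mul_assoc, mul_assoc]
  have hbr : yg d n u 1 * (yg d n u 2 * yg d n u 1)
      = yg d n u 2 * (yg d n u 1 * yg d n u 2) := by
    have h := braid12 (d := d) (u := u) hn
    rw [mul_assoc, mul_assoc] at h
    exact h
  simp only [ygSt, Nat.reduceAdd]
  simp only [mul_add, mul_one, add_mul, one_mul, smul_add, mul_smul_comm, smul_mul_assoc,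
    mul_assoc]
  rw [hbr, q, hq (yg d n u 1), hq (yg d n u 1 * yg d n u 2)]
  abel

end Concrete
section CFacts

variable {d n : ℕ} {u : ℂ}

lemma hyc :
    yc d n u 1 = (∑ k ∈ Finset.range d, yt d n u 1 ^ k)
      * (ye d n u 1 * (ye d n u 2 * ygSt d n u 1)) := by
  simp only [yc, Nat.reduceAdd, mul_assoc]

lemma hE1c (hd : 1 ≤ d) (hn : 3 ≤ n) : ye d n u 1 * yc d n u 1 = yc d n u 1 := by
  rw [hyc, yh_push (commE1S1 hn).eq, yh_fuse (hE1sq (u := u) hd hn)]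

lemma hE2c (hd : 1 ≤ d) (hn : 3 ≤ n) : ye d n u 2 * yc d n u 1 = yc d n u 1 := by
  rw [hyc, yh_push (commE2S1 hn).eq, yh_push ((commE1E2 (u := u) hn).symm.eq),
    yh_fuse (hE2sq (u := u) hd hn)]

lemma hE13c (hd : 1 ≤ d) (hn : 3 ≤ n) : yeij d n u 1 3 * yc d n u 1 = yc d n u 1 := by
  rw [hyc, yh_push (commE13S1 hn).eq, yh_push (commE13E1 (u := u) hn).eq,
    yh_fuse (hE13E2 (u := u) hd hn), mul_assoc, yh_fuse (hE1sq (u := u) hd hn)]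

lemma hg1c (hd : 1 ≤ d) (hn : 3 ≤ n) : yg d n u 1 * yc d n u 1 = u • yc d n u 1 := by
  rw [hyc, yh_push (hgS1 hn), yh_push (hgE1 (u := u) hn), yh_push (hgE2 (u := u) hn), gH1 hn]
  simp only [mul_add, mul_smul_comm]
  rw [yh_push (commE13E1 (u := u) hn).eq, yh_fuse (hE1sq (u := u) hd hn), yh_fuse (hE1E13 (u := u) hd hn), mul_assoc,
    ← mul_assoc _ (ye d n u 1) _, hS2E1 hn, mul_assoc]
  module

lemma hg2c (hd : 1 ≤ d) (hn : 3 ≤ n) : yg d n u 2 * yc d n u 1 = u • yc d n u 1 := by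
  rw [hyc, yh_push (hg2S1 hn), yh_push (hg2E1 (u := u) hn), yh_push (hg2E2 (u := u) hn), gH2 hn]
  simp only [mul_add, mul_smul_comm]
  rw [yh_fuse (hE2sq (u := u) hd hn), yh_fuse (hE13E2 (u := u) hd hn), mul_assoc]
  module

end CFacts
/-- Identities for `c_{1,2} = (∑_{k=0}^{d-1} t_1^k) e_1 e_2 g_{1,2}`
in `Y_{d,n}(u)` (`n ≥ 3`). -/
theorem stmt9 (d n : ℕ) (hd : 1 ≤ d) (hn : 3 ≤ n) (u : ℂ) (hu : u ≠ 0) :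
    (yg d n u 1 * yc d n u 1 = (1 + (u - 1) • ye d n u 1) * yc d n u 1) ∧
    (yg d n u 2 * yc d n u 1 = (1 + (u - 1) • ye d n u 2) * yc d n u 1) ∧
    (yg d n u 1 * yg d n u 2 * yc d n u 1 =
      (1 + (u - 1) • ye d n u 1 + (u - 1) • yeij d n u 1 3 +
        ((u - 1) ^ 2) • (ye d n u 1 * ye d n u 2)) * yc d n u 1) ∧
    (yg d n u 2 * yg d n u 1 * yc d n u 1 =
      (1 + (u - 1) • ye d n u 2 + (u - 1) • yeij d n u 1 3 +
        ((u - 1) ^ 2) • (ye d n u 1 * ye d n u 2)) * yc d n u 1) ∧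
    (yg d n u 1 * yg d n u 2 * yg d n u 1 * yc d n u 1 =
      (1 + (u - 1) • (ye d n u 1 + ye d n u 2 + yeij d n u 1 3) +
        ((u - 1) ^ 2 * (u + 2)) • (ye d n u 1 * ye d n u 2)) * yc d n u 1) := by
  have h1 := hg1c (d := d) (n := n) (u := u) hd hn
  have h2 := hg2c (d := d) (n := n) (u := u) hd hn
  have e1 := hE1c (d := d) (n := n) (u := u) hd hn
  have e2 := hE2c (d := d) (n := n) (u := u) hd hn
  have e13 := hE13c (d := d) (n := n) (u := u) hd hn
  refine ⟨?_, ?_, ?_, ?_, ?_⟩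
  · rw [h1, add_mul, one_mul, smul_mul_assoc, e1]
    module
  · rw [h2, add_mul, one_mul, smul_mul_assoc, e2]
    module
  · rw [mul_assoc, h2, mul_smul_comm, h1, smul_smul,
      add_mul, add_mul, add_mul, one_mul, smul_mul_assoc, smul_mul_assoc, smul_mul_assoc,
      e1, e13, mul_assoc, e2, e1]
    module
  · rw [mul_assoc, h1, mul_smul_comm, h2, smul_smul,
      add_mul, add_mul, add_mul, one_mul, smul_mul_assoc, smul_mul_assoc, smul_mul_assoc,
      e2, e13, mul_assoc, e2, e1]
    module
  · rw [mul_assoc, h1, mul_smul_comm, mul_assoc, h2, mul_smul_comm, h1,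
      add_mul, add_mul, one_mul, smul_mul_assoc, smul_mul_assoc,
      add_mul, add_mul, e1, e2, e13, mul_assoc, e2, e1]
    module
end
end
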